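/- Let p ≥ 2 be an integer and let k, k′ ≥ 0 be integers with |k − k′| = 1 satisfying (p+1)(3 − k(k+2)) = −(p−1)·k′(k′+2). Then either (k, k′) = (p, p+1) or (k, k′) = (1, 0). (This determines the possible Sym^kH-components of a Killing p-form u and of du from the first equation of system (sys1) with the Casimir eigenvalues j = −k(k+2), j′ = −k′(k′+2).) -/
import Mathlib

/-!
Statement 11: for `p ≥ 2` and `k, k′ ≥ 0` with `|k − k′| = 1` and
`(p+1)(3 − k(k+2)) = −(p−1)k′(k′+2)`, either `(k, k′) = (p, p+1)` or `(k, k′) = (1, 0)`.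
-/

theorem sl2_weight_analysis (p k k' : ℤ) (hp : 2 ≤ p) (hk : 0 ≤ k) (hk' : 0 ≤ k')
    (hkk' : |k - k'| = 1)
    (heq : (p + 1) * (3 - k * (k + 2)) = -(p - 1) * (k' * (k' + 2))) :
    (k = p ∧ k' = p + 1) ∨ (k = 1 ∧ k' = 0) := by
  rcases (abs_eq (by norm_num)).mp hkk' with h | h
  · -- k' = k - 1
    have hs : k' = k - 1 := by omega
    subst hs
    have h2 : 2 * ((k - 1) * (k + p + 2)) = 0 := by linear_combination -heq
    have h1 : (k - 1) * (k + p + 2) = 0 := by linarith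
    rcases mul_eq_zero.mp h1 with h2 | h2
    · right; omega
    · omega
  · -- k' = k + 1
    have hs : k' = k + 1 := by omega
    subst hs
    have h2 : 2 * ((k - p) * (k + 3)) = 0 := by linear_combination -heq
    have h1 : (k - p) * (k + 3) = 0 := by linarith
    rcases mul_eq_zero.mp h1 with h2 | h2
    · left; omega
    · omega
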